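/- If the beliefs Π satisfy convex independence, then full extraction holds: for every value function v : T → ℝ there exists a menu c : T → ℝ^S achieving full extraction for (Π, v). -/

import Mathlib

noncomputable section

/-- Euclidean inner product on ℝ^S. -/
def dotp {S : Type*} [Fintype S] (x y : S → ℝ) : ℝ := ∑ s, x s * y s

/-- A menu `c` achieves full extraction for beliefs `P` and values `v`. -/
def FullExtraction {S T : Type*} [Fintype S] [Fintype T]
    (P : T → Set (S → ℝ)) (v : T → ℝ) (c : T → (S → ℝ)) : Prop :=
  ∀ t : T, (∀ π ∈ P t, dotp π (c t) ≤ v t) ∧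
    (∃ π ∈ P t, dotp π (c t) = v t) ∧
    (∀ π ∈ P t, ∀ s, s ≠ t → v t ≤ dotp π (c s))

/-- A continuous linear functional on `ℝ^S` is given by the dot product against the
vector of its values on the standard basis. -/
lemma dotp_eq (S : Type*) [Fintype S] [DecidableEq S] (f : (S → ℝ) →L[ℝ] ℝ) (x : S → ℝ) :
    f x = dotp x (fun s => f (Pi.single s 1)) := by
  conv_lhs => rw [← Finset.univ_sum_single x]
  rw [map_sum, dotp]
  refine Finset.sum_congr rfl fun s _ => ?_
  have h : Pi.single s (x s) = x s • (Pi.single s (1:ℝ) : S → ℝ) := by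
    rw [← Pi.single_smul]
    norm_num
  rw [h, map_smul, smul_eq_mul]

lemma dot_aff {S : Type*} [Fintype S] (π : S → ℝ) (hπ : ∑ s, π s = 1) (a b : ℝ) (g : S → ℝ) :
    dotp π (fun s => a + b * g s) = a + b * dotp π g := by
  simp only [dotp, mul_add, Finset.sum_add_distrib, ← Finset.sum_mul, hπ, one_mul,
    Finset.mul_sum]
  congr 1
  · exact Finset.sum_congr rfl fun s _ => by ring

lemma dot_sub_const {S : Type*} [Fintype S] (π : S → ℝ) (hπ : ∑ s, π s = 1) (m : ℝ) (g : S → ℝ) :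
    dotp π (fun s => g s - m) = dotp π g - m := by
  simp only [dotp, mul_sub, Finset.sum_sub_distrib, ← Finset.sum_mul, hπ, one_mul]

/-- Strict separation of a nonempty compact convex set from a disjoint closed convex set,
normalized so that the separating functional has maximum `0` on the compact set. -/
lemma sep {S : Type*} [Fintype S] [DecidableEq S] (A B : Set (S → ℝ))
    (hA : IsCompact A) (hAne : A.Nonempty) (hAcv : Convex ℝ A)
    (hB : IsClosed B) (hBcv : Convex ℝ B) (hd : A ∩ B = ∅)
    (hAs : A ⊆ stdSimplex ℝ S) (hBs : B ⊆ stdSimplex ℝ S) :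
    ∃ g : S → ℝ, ∃ δ : ℝ, 0 < δ ∧ (∀ π ∈ A, dotp π g ≤ 0) ∧ (∃ π ∈ A, dotp π g = 0) ∧
      (∀ π ∈ B, δ ≤ dotp π g) := by
  obtain ⟨f, u, w, hfu, huw, hwf⟩ :=
    geometric_hahn_banach_compact_closed hAcv hA hBcv hB (Set.disjoint_iff_inter_eq_empty.mpr hd)
  obtain ⟨π0, hπ0, hmax⟩ := hA.exists_isMaxOn hAne f.continuous.continuousOn
  set m := f π0 with hm
  refine ⟨fun s => f (Pi.single s 1) - m, w - u, by linarith, ?_, ⟨π0, hπ0, ?_⟩, ?_⟩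
  · intro π hπ
    rw [dot_sub_const _ (hAs hπ).2, ← dotp_eq]
    have := hmax hπ
    simpa using this
  · rw [dot_sub_const _ (hAs hπ0).2, ← dotp_eq]
    simp [hm]
  · intro π hπ
    rw [dot_sub_const _ (hBs hπ).2, ← dotp_eq]
    have h1 := hwf π hπ
    have h2 := hfu π0 hπ0
    linarith

theorem stmt_1 {S T : Type*} [Fintype S] [Fintype T] [Nonempty S] [Nonempty T]
    (P : T → Set (S → ℝ))
    (hne : ∀ t, (P t).Nonempty) (hcl : ∀ t, IsClosed (P t))
    (hcv : ∀ t, Convex ℝ (P t)) (hsub : ∀ t, P t ⊆ stdSimplex ℝ S)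
    (hci : ∀ t : T, P t ∩ closure (convexHull ℝ (⋃ s ∈ {s : T | s ≠ t}, P s)) = ∅)
    (v : T → ℝ) :
    ∃ c : T → (S → ℝ), FullExtraction P v c := by
  classical
  set K : T → Set (S → ℝ) := fun t => closure (convexHull ℝ (⋃ s ∈ {s : T | s ≠ t}, P s))
    with hK
  have hKsub : ∀ t, K t ⊆ stdSimplex ℝ S := by
    intro t
    have h1 : (⋃ s ∈ {s : T | s ≠ t}, P s) ⊆ stdSimplex ℝ S := by
      simp only [Set.iUnion_subset_iff]; exact fun s _ => hsub s
    have h2 : convexHull ℝ (⋃ s ∈ {s : T | s ≠ t}, P s) ⊆ stdSimplex ℝ S :=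
      convexHull_min h1 (convex_stdSimplex ℝ S)
    exact (isClosed_stdSimplex ℝ S).closure_subset_iff.mpr h2
  have hPK : ∀ t : T, ∀ s : T, s ≠ t → P s ⊆ K t := by
    intro t s hst
    refine Set.Subset.trans ?_ (Set.Subset.trans (subset_convexHull ℝ _) subset_closure)
    exact Set.subset_biUnion_of_mem (u := P) hst
  have hPcpt : ∀ t, IsCompact (P t) := fun t =>
    (isCompact_stdSimplex ℝ S).of_isClosed_subset (hcl t) (hsub t)
  have hsep : ∀ t, ∃ g : S → ℝ, ∃ δ : ℝ, 0 < δ ∧ (∀ π ∈ P t, dotp π g ≤ 0) ∧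
      (∃ π ∈ P t, dotp π g = 0) ∧ (∀ π ∈ K t, δ ≤ dotp π g) := by
    intro t
    exact sep (P t) (K t) (hPcpt t) (hne t) (hcv t) isClosed_closure
      ((convex_convexHull ℝ _).closure) (hci t) (hsub t) (hKsub t)
  choose g δ hδ hg1 hg2 hg3 using hsep
  obtain ⟨M, hM⟩ := Finite.exists_le v
  refine ⟨fun t => fun s => v t + ((M - v t) / δ t) * g t s, fun t => ⟨?_, ?_, ?_⟩⟩
  · intro π hπ
    rw [dot_aff π (hsub t hπ).2]
    have hlam : 0 ≤ (M - v t) / δ t := div_nonneg (by linarith [hM t]) (hδ t).le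
    nlinarith [hg1 t π hπ]
  · obtain ⟨π, hπ, hπ0⟩ := hg2 t
    exact ⟨π, hπ, by rw [dot_aff π (hsub t hπ).2, hπ0]; ring⟩
  · intro π hπ s hst
    rw [dot_aff π (hsub t hπ).2]
    have hπK : π ∈ K s := hPK s t hst.symm hπ
    have h1 := hg3 s π hπK
    have hlam : 0 ≤ (M - v s) / δ s := div_nonneg (by linarith [hM s]) (hδ s).le
    have h2 : (M - v s) / δ s * δ s ≤ (M - v s) / δ s * dotp π (g s) :=
      mul_le_mul_of_nonneg_left h1 hlam
    rw [div_mul_cancel₀ _ (hδ s).ne'] at h2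
    linarith [hM t]
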